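/- For every 2π-periodic C² function v : ℝ → ℝ, one has the spectral gap estimate −⟨Ã₂v, v⟩_{−1,w} ≥ (exp(−4Kr₀)/2)·‖v − (∫₀^{2π} v)·w‖²_{−1,w}. -/

import Mathlib

noncomputable section

open MeasureTheory

/-- `Ψ₀(x)`: the non-disordered fixed-point function. -/
def Psi0 (x : ℝ) : ℝ :=
  (∫ θ in (0:ℝ)..(2 * Real.pi), Real.cos θ * Real.exp (x * Real.cos θ)) /
    (∫ θ in (0:ℝ)..(2 * Real.pi), Real.exp (x * Real.cos θ))

/-- The potential `Φ(θ) = −2Kr₀·cos θ`. -/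
def Phi (K r₀ θ : ℝ) : ℝ := -2 * K * r₀ * Real.cos θ

/-- The weight `w(θ) = exp(−Φ(θ))/∫₀^{2π} exp(−Φ)`. -/
def w (K r₀ θ : ℝ) : ℝ :=
  Real.exp (-Phi K r₀ θ) / (∫ u in (0:ℝ)..(2 * Real.pi), Real.exp (-Phi K r₀ u))

/-- The Fokker–Planck operator `Ã₂v = (1/2)v'' + (Kr₀ sin(θ) v)'`. -/
def A2 (K r₀ : ℝ) (v : ℝ → ℝ) (θ : ℝ) : ℝ :=
  (1 / 2) * deriv (deriv v) θ + deriv (fun u => K * r₀ * Real.sin u * v u) θ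

/-- The `2π`-periodic primitive of a zero-mean `a`, normalized so that
`∫₀^{2π} 𝒜/k = 0` for the weight `k`. -/
def prim (k a : ℝ → ℝ) (θ : ℝ) : ℝ :=
  (∫ u in (0:ℝ)..θ, a u) -
    (∫ s in (0:ℝ)..(2 * Real.pi), (∫ u in (0:ℝ)..s, a u) / k s) /
      (∫ s in (0:ℝ)..(2 * Real.pi), 1 / k s)

/-- `v₀ = v − (∫₀^{2π} v)·w`, the zero-mean part of `v`. -/
def vz (K r₀ : ℝ) (v : ℝ → ℝ) (θ : ℝ) : ℝ :=
  v θ - (∫ u in (0:ℝ)..(2 * Real.pi), v u) * w K r₀ θ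

/-- The weighted Sobolev inner product `⟨u, v⟩_{−1,w}`. -/
def pairW (K r₀ : ℝ) (u v : ℝ → ℝ) : ℝ :=
  (∫ θ in (0:ℝ)..(2 * Real.pi), u θ) * (∫ θ in (0:ℝ)..(2 * Real.pi), v θ) +
    ∫ θ in (0:ℝ)..(2 * Real.pi),
      prim (w K r₀) (vz K r₀ u) θ * prim (w K r₀) (vz K r₀ v) θ / w K r₀ θ

lemma fourierCoeffOn_congr' {a b b' : ℝ} (hb : b = b') (hab : a < b) (hab' : a < b')
    (f : ℝ → ℂ) (n : ℤ) : fourierCoeffOn hab f n = fourierCoeffOn hab' f n := by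
  subst hb; rfl

lemma parseval_periodic {T : ℝ} (hT : 0 < T) {h : ℝ → ℂ} (hc : Continuous h) (hp : h 0 = h T) :
    HasSum (fun n : ℤ => ‖fourierCoeffOn (by linarith : (0:ℝ) < T) h n‖ ^ 2)
      ((1 / T) * ∫ x in (0:ℝ)..T, ‖h x‖ ^ 2) := by
  haveI : Fact (0 < T) := ⟨hT⟩
  set F : C(AddCircle T, ℂ) :=
    ⟨AddCircle.liftIco T 0 h, AddCircle.liftIco_zero_continuous hp hc.continuousOn⟩ with hF
  have hFcoe : ∀ x ∈ Set.Ico (0:ℝ) T, F x = h x := fun x hx =>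
    AddCircle.liftIco_zero_coe_apply hx
  have hcoeff : ∀ n : ℤ, fourierCoeff (⇑F) n = fourierCoeffOn (by linarith : (0:ℝ) < T) h n := by
    intro n
    have h1 : fourierCoeff (AddCircle.liftIco T 0 h) n
        = fourierCoeffOn (lt_add_of_pos_right 0 hT) h n := fourierCoeff_liftIco_eq h n
    rw [hF]; simp only [ContinuousMap.coe_mk]
    rw [h1]
    exact fourierCoeffOn_congr' (by ring) _ _ _ _
  set Flp := (ContinuousMap.toLp 2 AddCircle.haarAddCircle ℂ) F with hFlp
  have hpars := tsum_sq_fourierCoeff Flp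
  have hsum : Summable fun n : ℤ => ‖fourierCoeff (⇑F) n‖ ^ 2 := by
    have hm := lp.memℓp (fourierBasis.repr Flp)
    rw [memℓp_gen_iff (by norm_num : (0:ℝ) < (2 : ENNReal).toReal)] at hm
    have : ∀ n : ℤ, ‖(fourierBasis.repr Flp) n‖ ^ ((2:ENNReal).toReal)
        = ‖fourierCoeff (⇑F) n‖ ^ 2 := by
      intro n
      rw [fourierBasis_repr, fourierCoeff_toLp]
      norm_num
    exact (summable_congr this).mp hm
  have hcoeff2 : ∀ n : ℤ, fourierCoeff (↑↑Flp : AddCircle T → ℂ) n = fourierCoeff (⇑F) n :=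
    fun n => fourierCoeff_toLp F n
  rw [funext hcoeff2] at hpars
  have hint : (∫ t : AddCircle T, ‖(↑↑Flp : AddCircle T → ℂ) t‖ ^ 2 ∂AddCircle.haarAddCircle)
      = (1 / T) * ∫ x in (0:ℝ)..T, ‖h x‖ ^ 2 := by
    have h1 : (∫ t : AddCircle T, ‖(↑↑Flp : AddCircle T → ℂ) t‖ ^ 2 ∂AddCircle.haarAddCircle)
        = ∫ t : AddCircle T, ‖F t‖ ^ 2 ∂AddCircle.haarAddCircle := by
      apply integral_congr_ae
      filter_upwards [ContinuousMap.coeFn_toLp (p := 2) AddCircle.haarAddCircle (𝕜 := ℂ) F]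
        with t ht
      rw [ht]
    have h2 : (∫ t : AddCircle T, ‖F t‖ ^ 2)
        = T * ∫ t : AddCircle T, ‖F t‖ ^ 2 ∂AddCircle.haarAddCircle := by
      rw [AddCircle.volume_eq_smul_haarAddCircle, integral_smul_measure,
        ENNReal.toReal_ofReal hT.le, smul_eq_mul]
    have h3 : (∫ x in (0:ℝ)..T, ‖F (x : AddCircle T)‖ ^ 2) = ∫ t : AddCircle T, ‖F t‖ ^ 2 := by
      have := AddCircle.intervalIntegral_preimage T 0 (fun t => ‖F t‖ ^ 2)
      simpa using this
    have h4 : (∫ x in (0:ℝ)..T, ‖F (x : AddCircle T)‖ ^ 2) = ∫ x in (0:ℝ)..T, ‖h x‖ ^ 2 := by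
      apply intervalIntegral.integral_congr_ae
      filter_upwards [Set.Countable.ae_notMem (Set.countable_singleton T) volume] with x hx hmem
      rw [Set.uIoc_of_le hT.le] at hmem
      rw [hFcoe x ⟨hmem.1.le, lt_of_le_of_ne hmem.2 (fun hh => hx (by simpa using hh))⟩]
    rw [h1, ← h4, h3, h2, one_div, ← mul_assoc, inv_mul_cancel₀ hT.ne', one_mul]
  rw [hint] at hpars
  rw [funext hcoeff] at hpars hsum
  exact hpars ▸ hsum.hasSum

lemma wirtinger {f g : ℝ → ℝ} (hfd : ∀ x, HasDerivAt f (g x) x) (hg : Continuous g)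
    (hfp : f (2 * Real.pi) = f 0) (hgp : g (2 * Real.pi) = g 0)
    (hmean : (∫ x in (0:ℝ)..(2 * Real.pi), f x) = 0) :
    (∫ x in (0:ℝ)..(2 * Real.pi), f x ^ 2) ≤ ∫ x in (0:ℝ)..(2 * Real.pi), g x ^ 2 := by
  have hT : (0:ℝ) < 2 * Real.pi := by positivity
  have hfc : Continuous f := continuous_iff_continuousAt.mpr fun x => (hfd x).continuousAt
  set fc : ℝ → ℂ := fun x => (f x : ℂ) with hfcdef
  set gc : ℝ → ℂ := fun x => (g x : ℂ) with hgcdef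
  have hfccont : Continuous fc := Complex.continuous_ofReal.comp hfc
  have hgccont : Continuous gc := Complex.continuous_ofReal.comp hg
  have Pf := parseval_periodic hT hfccont (by simp only [hfcdef]; exact_mod_cast hfp.symm)
  have Pg := parseval_periodic hT hgccont (by simp only [hgcdef]; exact_mod_cast hgp.symm)
  have key : ∀ n : ℤ, ‖fourierCoeffOn hT fc n‖ ^ 2 ≤ ‖fourierCoeffOn hT gc n‖ ^ 2 := by
    intro n
    rcases eq_or_ne n 0 with rfl | hn
    · have h0 : fourierCoeffOn hT fc 0 = 0 := by
        rw [fourierCoeffOn_eq_integral]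
        simp only [neg_zero, fourier_zero, one_smul, hfcdef]
        rw [intervalIntegral.integral_ofReal, hmean]
        simp
      rw [h0, norm_zero]
      simpa using sq_nonneg ‖fourierCoeffOn hT gc 0‖
    · have hrel := fourierCoeffOn_of_hasDerivAt hT hn (fun x _ => (hfd x).ofReal_comp)
        (hgccont.intervalIntegrable 0 (2 * Real.pi))
      have hzero : fc (2 * Real.pi) - fc 0 = 0 := by
        simp only [hfcdef]; rw [sub_eq_zero]; exact_mod_cast hfp
      rw [hzero, mul_zero, zero_sub] at hrel
      have hn' : ((n:ℂ)) ≠ 0 := Int.cast_ne_zero.mpr hn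
      have hrel2 : fourierCoeffOn hT fc n = (Complex.I * n)⁻¹ * fourierCoeffOn hT gc n := by
        rw [hrel]
        have hπ : (Real.pi : ℂ) ≠ 0 := Complex.ofReal_ne_zero.mpr Real.pi_ne_zero
        field_simp [Complex.I_ne_zero]
        simp only [hgcdef]; push_cast; ring
      rw [hrel2, norm_mul, norm_inv, norm_mul, Complex.norm_I, one_mul, Complex.norm_intCast]
      have hn1 : (1:ℝ) ≤ |(n:ℝ)| := by exact_mod_cast Int.one_le_abs hn
      calc (‖(n:ℤ)‖⁻¹ * ‖fourierCoeffOn hT gc n‖) ^ 2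
          ≤ (1 * ‖fourierCoeffOn hT gc n‖) ^ 2 := by
            apply pow_le_pow_left₀ (by positivity)
            apply mul_le_mul_of_nonneg_right _ (norm_nonneg _)
            rw [Int.norm_eq_abs]
            exact_mod_cast inv_le_one_of_one_le₀ (by exact_mod_cast hn1)
          _ = ‖fourierCoeffOn hT gc n‖ ^ 2 := by rw [one_mul]
  have hle := hasSum_le key Pf Pg
  have h2π : (0:ℝ) < 1 / (2 * Real.pi) := by positivity
  have hAB : (∫ x in (0:ℝ)..(2 * Real.pi), ‖fc x‖ ^ 2) ≤ ∫ x in (0:ℝ)..(2 * Real.pi), ‖gc x‖ ^ 2 :=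
    (mul_le_mul_iff_right₀ h2π).mp hle
  calc (∫ x in (0:ℝ)..(2 * Real.pi), f x ^ 2)
      = ∫ x in (0:ℝ)..(2 * Real.pi), ‖fc x‖ ^ 2 := by
        apply intervalIntegral.integral_congr; intro x _
        simp [hfcdef, Complex.norm_real, Real.norm_eq_abs, sq_abs]
    _ ≤ ∫ x in (0:ℝ)..(2 * Real.pi), ‖gc x‖ ^ 2 := hAB
    _ = ∫ x in (0:ℝ)..(2 * Real.pi), g x ^ 2 := by
        apply intervalIntegral.integral_congr; intro x _
        simp [hgcdef, Complex.norm_real, Real.norm_eq_abs, sq_abs]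

lemma intpos {h : ℝ → ℝ} (hc : Continuous h) (hp : ∀ x, 0 < h x) :
    0 < ∫ x in (0:ℝ)..(2 * Real.pi), h x :=
  intervalIntegral.intervalIntegral_pos_of_pos_on (hc.intervalIntegrable _ _)
    (fun x _ => hp x) (by positivity)

set_option maxHeartbeats 2000000 in
/-- Spectral gap estimate for the Fokker–Planck operator in the weighted Sobolev norm. -/
theorem stmt12 (K r₀ : ℝ) (hK : 1 < K) (hr₀ : 0 < r₀) (hfix : r₀ = Psi0 (2 * K * r₀))
    (v : ℝ → ℝ) (hv : ContDiff ℝ 2 v) (hper : Function.Periodic v (2 * Real.pi)) :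
    (Real.exp (-(4 * K * r₀)) / 2) * pairW K r₀ (vz K r₀ v) (vz K r₀ v) ≤
      -pairW K r₀ (fun θ => A2 K r₀ v θ) v := by
  have hπ : (0:ℝ) < 2 * Real.pi := by positivity
  have hπ' : (0:ℝ) ≤ 2 * Real.pi := hπ.le
  have hKpos : (0:ℝ) < K := lt_trans zero_lt_one hK
  set c := 2 * K * r₀ with hcdef
  have hc : 0 < c := by positivity
  -- the weight
  have hPhicont : Continuous fun u : ℝ => Real.exp (-Phi K r₀ u) := by
    apply Real.continuous_exp.comp
    apply Continuous.neg
    unfold Phi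
    fun_prop
  set Z := ∫ u in (0:ℝ)..(2 * Real.pi), Real.exp (-Phi K r₀ u) with hZdef
  have hZ : 0 < Z := intpos hPhicont fun x => Real.exp_pos _
  have harg : ∀ θ, -Phi K r₀ θ = c * Real.cos θ := fun θ => by
    simp only [Phi]; rw [hcdef]; ring
  have hwdef : ∀ θ, w K r₀ θ = Real.exp (c * Real.cos θ) / Z := by
    intro θ
    simp only [w]
    rw [harg θ]
  have hwpos : ∀ θ, 0 < w K r₀ θ := fun θ => by rw [hwdef]; positivity
  have hwfun : w K r₀ = fun θ => Real.exp (c * Real.cos θ) / Z := funext hwdef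
  have hwcont : Continuous (w K r₀) := by rw [hwfun]; fun_prop
  have hwd : ∀ θ, HasDerivAt (w K r₀) (-(c * Real.sin θ) * w K r₀ θ) θ := by
    intro θ
    rw [hwfun]
    have h1 : HasDerivAt (fun x : ℝ => c * Real.cos x) (c * -Real.sin θ) θ :=
      (Real.hasDerivAt_cos θ).const_mul c
    have h2 := (h1.exp).div_const Z
    refine h2.congr_deriv ?_
    ring
  have hwper : w K r₀ (2 * Real.pi) = w K r₀ 0 := by
    rw [hwdef, hwdef, Real.cos_two_pi, Real.cos_zero]
  have hw_ub : ∀ θ, w K r₀ θ ≤ Real.exp c / Z := by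
    intro θ
    rw [hwdef]
    have h1 : c * Real.cos θ ≤ c := by nlinarith [Real.cos_le_one θ]
    exact (div_le_div_iff_of_pos_right hZ).mpr (Real.exp_le_exp.mpr h1)
  have hw_lb : ∀ θ, Real.exp (-c) / Z ≤ w K r₀ θ := by
    intro θ
    rw [hwdef]
    have h1 : -c ≤ c * Real.cos θ := by nlinarith [Real.neg_one_le_cos θ]
    exact (div_le_div_iff_of_pos_right hZ).mpr (Real.exp_le_exp.mpr h1)
  have hw1 : (∫ θ in (0:ℝ)..(2 * Real.pi), w K r₀ θ) = 1 := by
    have he : ∀ θ ∈ Set.uIcc (0:ℝ) (2 * Real.pi),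
        w K r₀ θ = Real.exp (-Phi K r₀ θ) / Z := fun θ _ => rfl
    rw [intervalIntegral.integral_congr he, intervalIntegral.integral_div, ← hZdef,
      div_self hZ.ne']
  -- derivatives of v
  have hvdiff_and := (contDiff_succ_iff_deriv (n := 1) (f := v)).mp (by exact_mod_cast hv)
  have hvdiff : Differentiable ℝ v := hvdiff_and.1
  have hvc : Continuous v := hvdiff.continuous
  have hdv1 : ContDiff ℝ 1 (deriv v) := hvdiff_and.2.2
  have hdvdiff : Differentiable ℝ (deriv v) := hdv1.differentiable one_ne_zero
  have hdvc : Continuous (deriv v) := hdvdiff.continuous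
  have hddvc : Continuous (deriv (deriv v)) := (contDiff_one_iff_deriv.mp hdv1).2
  have hdvat : ∀ x, HasDerivAt v (deriv v x) x := fun x => (hvdiff x).hasDerivAt
  have hddvat : ∀ x, HasDerivAt (deriv v) (deriv (deriv v) x) x := fun x => (hdvdiff x).hasDerivAt
  have hvper : v (2 * Real.pi) = v 0 := by simpa using hper 0
  have hdvper : deriv v (2 * Real.pi) = deriv v 0 := by
    have h1 : HasDerivAt (fun y => v (y + 2 * Real.pi)) (deriv v (0 + 2 * Real.pi)) 0 :=
      HasDerivAt.comp_add_const 0 (2 * Real.pi) (hdvat (0 + 2 * Real.pi))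
    have h2 : (fun y => v (y + 2 * Real.pi)) = v := funext hper
    rw [h2] at h1
    have h3 := (hdvat 0).unique h1
    rw [zero_add] at h3
    exact h3.symm
  -- closed form of A2
  have hsinvd : ∀ θ, HasDerivAt (fun u => K * r₀ * Real.sin u * v u)
      (K * r₀ * Real.cos θ * v θ + K * r₀ * Real.sin θ * deriv v θ) θ := by
    intro θ
    exact ((Real.hasDerivAt_sin θ).const_mul (K * r₀)).mul (hdvat θ)
  have hA2eq : ∀ θ, A2 K r₀ v θ = (1/2) * deriv (deriv v) θ +
      (K * r₀ * Real.cos θ * v θ + K * r₀ * Real.sin θ * deriv v θ) := by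
    intro θ
    simp only [A2]
    rw [(hsinvd θ).deriv]
  have hA2cont : Continuous fun θ => A2 K r₀ v θ := by
    have hcc : Continuous fun θ => (1/2) * deriv (deriv v) θ +
        (K * r₀ * Real.cos θ * v θ + K * r₀ * Real.sin θ * deriv v θ) := by fun_prop
    exact hcc.congr fun θ => (hA2eq θ).symm
  -- the primitive g of A2 v
  have hgd : ∀ θ, HasDerivAt (fun θ => (1/2) * deriv v θ + K * r₀ * Real.sin θ * v θ)
      (A2 K r₀ v θ) θ := by
    intro θ
    have h1 := ((hddvat θ).const_mul (1/2 : ℝ)).add (hsinvd θ)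
    rw [hA2eq θ]
    exact h1
  have hgcont : Continuous fun θ => (1/2) * deriv v θ + K * r₀ * Real.sin θ * v θ := by fun_prop
  have hgper : (1/2) * deriv v (2 * Real.pi) + K * r₀ * Real.sin (2 * Real.pi) * v (2 * Real.pi)
      = (1/2) * deriv v 0 + K * r₀ * Real.sin 0 * v 0 := by
    rw [hvper, hdvper, Real.sin_two_pi, Real.sin_zero]
  have hA2mean : (∫ θ in (0:ℝ)..(2 * Real.pi), A2 K r₀ v θ) = 0 := by
    rw [intervalIntegral.integral_eq_sub_of_hasDerivAt (fun x _ => hgd x)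
      (hA2cont.intervalIntegrable _ _), hgper, sub_self]
  -- the zero-mean part v₀
  set Iv := ∫ θ in (0:ℝ)..(2 * Real.pi), v θ with hIvdef
  set v₀ : ℝ → ℝ := fun θ => v θ - Iv * w K r₀ θ with hv₀def
  have hvzv : vz K r₀ v = v₀ := by
    funext θ
    simp only [vz, hv₀def]
    rfl
  have hv₀cont : Continuous v₀ := hvc.sub (continuous_const.mul hwcont)
  have hv₀mean : (∫ θ in (0:ℝ)..(2 * Real.pi), v₀ θ) = 0 := by
    simp only [hv₀def]
    rw [intervalIntegral.integral_sub (g := fun θ => Iv * w K r₀ θ) (hvc.intervalIntegrable _ _)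
      ((continuous_const.mul hwcont).intervalIntegrable _ _),
      intervalIntegral.integral_const_mul, hw1, mul_one, ← hIvdef, sub_self]
  have hv₀per : v₀ (2 * Real.pi) = v₀ 0 := by
    simp only [hv₀def, hvper, hwper]
  have hv₀d : ∀ θ, HasDerivAt v₀ (deriv v θ - Iv * (-(c * Real.sin θ) * w K r₀ θ)) θ :=
    fun θ => (hdvat θ).sub ((hwd θ).const_mul Iv)
  -- the key algebraic identity relating g and v₀
  have hgid : ∀ θ, (1/2) * deriv v θ + K * r₀ * Real.sin θ * v θ
      = (1/2) * (deriv v θ - Iv * (-(c * Real.sin θ) * w K r₀ θ))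
        + K * r₀ * Real.sin θ * v₀ θ := by
    intro θ
    simp only [hv₀def]
    rw [hcdef]
    ring
  -- vz fixes A2 v
  have hvzA2 : vz K r₀ (fun θ => A2 K r₀ v θ) = fun θ => A2 K r₀ v θ := by
    funext θ
    simp only [vz]
    rw [hA2mean, zero_mul, sub_zero]
  -- facts about the normalized primitive
  have hinvwcont : Continuous fun θ => 1 / w K r₀ θ :=
    continuous_const.div hwcont fun θ => (hwpos θ).ne'
  have hIinvw : 0 < ∫ s in (0:ℝ)..(2 * Real.pi), 1 / w K r₀ s :=
    intpos hinvwcont fun x => one_div_pos.mpr (hwpos x)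
  have primderiv : ∀ a : ℝ → ℝ, Continuous a → ∀ θ, HasDerivAt (prim (w K r₀) a) (a θ) θ := by
    intro a ha θ
    have h1 : HasDerivAt (fun t => ∫ u in (0:ℝ)..t, a u) (a θ) θ :=
      intervalIntegral.integral_hasDerivAt_right (ha.intervalIntegrable _ _)
        (ha.stronglyMeasurableAtFilter _ _) ha.continuousAt
    exact h1.sub_const _
  have primcont : ∀ a : ℝ → ℝ, Continuous a → Continuous (prim (w K r₀) a) := by
    intro a ha
    exact continuous_iff_continuousAt.mpr fun θ => (primderiv a ha θ).continuousAt
  have primmean : ∀ a : ℝ → ℝ, Continuous a →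
      (∫ θ in (0:ℝ)..(2 * Real.pi), prim (w K r₀) a θ / w K r₀ θ) = 0 := by
    intro a ha
    have hFcont : Continuous fun t : ℝ => ∫ u in (0:ℝ)..t, a u :=
      continuous_iff_continuousAt.mpr fun θ =>
        (intervalIntegral.integral_hasDerivAt_right (ha.intervalIntegrable _ _)
          (ha.stronglyMeasurableAtFilter _ _) ha.continuousAt).continuousAt
    have he : ∀ θ ∈ Set.uIcc (0:ℝ) (2 * Real.pi), prim (w K r₀) a θ / w K r₀ θ =
        (∫ u in (0:ℝ)..θ, a u) / w K r₀ θ -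
          ((∫ s in (0:ℝ)..(2 * Real.pi), (∫ u in (0:ℝ)..s, a u) / w K r₀ s) /
            (∫ s in (0:ℝ)..(2 * Real.pi), 1 / w K r₀ s)) * (1 / w K r₀ θ) := by
      intro θ _
      simp only [prim]
      ring
    have hi1 : IntervalIntegrable (fun θ => (∫ u in (0:ℝ)..θ, a u) / w K r₀ θ)
        volume 0 (2 * Real.pi) :=
      ((hFcont.div hwcont fun θ => (hwpos θ).ne')).intervalIntegrable _ _
    have hi2 : IntervalIntegrable (fun θ =>
        ((∫ s in (0:ℝ)..(2 * Real.pi), (∫ u in (0:ℝ)..s, a u) / w K r₀ s) /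
          (∫ s in (0:ℝ)..(2 * Real.pi), 1 / w K r₀ s)) * (1 / w K r₀ θ))
        volume 0 (2 * Real.pi) :=
      (continuous_const.mul hinvwcont).intervalIntegrable _ _
    rw [intervalIntegral.integral_congr he, intervalIntegral.integral_sub hi1 hi2,
      intervalIntegral.integral_const_mul, div_mul_cancel₀ _ hIinvw.ne', sub_self]
  -- the primitive of v₀
  have hVd : ∀ θ, HasDerivAt (prim (w K r₀) v₀) (v₀ θ) θ := primderiv v₀ hv₀cont
  have hVcont : Continuous (prim (w K r₀) v₀) := primcont v₀ hv₀cont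
  have hVmean : (∫ θ in (0:ℝ)..(2 * Real.pi), prim (w K r₀) v₀ θ / w K r₀ θ) = 0 :=
    primmean v₀ hv₀cont
  have hVper : prim (w K r₀) v₀ (2 * Real.pi) = prim (w K r₀) v₀ 0 := by
    simp only [prim]
    rw [hv₀mean, intervalIntegral.integral_same]
  -- the primitive of A2 v is g - CA
  have hFA : ∀ θ : ℝ, (∫ u in (0:ℝ)..θ, A2 K r₀ v u) =
      ((1/2) * deriv v θ + K * r₀ * Real.sin θ * v θ) -
      ((1/2) * deriv v 0 + K * r₀ * Real.sin 0 * v 0) := fun θ =>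
    intervalIntegral.integral_eq_sub_of_hasDerivAt (fun x _ => hgd x)
      (hA2cont.intervalIntegrable _ _)
  obtain ⟨CA, hCA⟩ : ∃ CA : ℝ, ∀ θ, prim (w K r₀) (fun θ => A2 K r₀ v θ) θ =
      ((1/2) * deriv v θ + K * r₀ * Real.sin θ * v θ) - CA := by
    refine ⟨((1/2) * deriv v 0 + K * r₀ * Real.sin 0 * v 0) +
      (∫ s in (0:ℝ)..(2 * Real.pi), (∫ u in (0:ℝ)..s, A2 K r₀ v u) / w K r₀ s) /
        (∫ s in (0:ℝ)..(2 * Real.pi), 1 / w K r₀ s), fun θ => ?_⟩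
    simp only [prim]
    rw [hFA θ]
    ring
  -- derivative of v₀ / w
  have hud : ∀ θ, HasDerivAt (fun θ => v₀ θ / w K r₀ θ)
      (2 * ((1/2) * deriv v θ + K * r₀ * Real.sin θ * v θ) / w K r₀ θ) θ := by
    intro θ
    have h := (hv₀d θ).div (hwd θ) (hwpos θ).ne'
    refine h.congr_deriv ?_
    rw [hgid θ, hcdef]
    have hw0 : w K r₀ θ ≠ 0 := (hwpos θ).ne'
    field_simp
    ring
  have hucont : Continuous fun θ => v₀ θ / w K r₀ θ :=
    hv₀cont.div hwcont fun θ => (hwpos θ).ne'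
  have hducont : Continuous fun θ =>
      2 * ((1/2) * deriv v θ + K * r₀ * Real.sin θ * v θ) / w K r₀ θ :=
    (continuous_const.mul hgcont).div hwcont fun θ => (hwpos θ).ne'
  -- integration by parts
  have hIBP := intervalIntegral.integral_mul_deriv_eq_deriv_mul
    (u := fun θ => v₀ θ / w K r₀ θ) (v := prim (w K r₀) v₀)
    (u' := fun θ => 2 * ((1/2) * deriv v θ + K * r₀ * Real.sin θ * v θ) / w K r₀ θ)
    (v' := v₀) (a := 0) (b := 2 * Real.pi)
    (fun x _ => hud x) (fun x _ => hVd x)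
    (hducont.intervalIntegrable _ _) (hv₀cont.intervalIntegrable _ _)
  have hbdry : v₀ (2 * Real.pi) / w K r₀ (2 * Real.pi) = v₀ 0 / w K r₀ 0 := by
    rw [hv₀per, hwper]
  have huv₀ : (∫ x in (0:ℝ)..(2 * Real.pi), v₀ x / w K r₀ x * v₀ x)
      = ∫ x in (0:ℝ)..(2 * Real.pi), (v₀ x)^2 / w K r₀ x := by
    apply intervalIntegral.integral_congr
    intro x _
    ring
  have hkey : (∫ x in (0:ℝ)..(2 * Real.pi),
      2 * ((1/2) * deriv v x + K * r₀ * Real.sin x * v x) / w K r₀ x * prim (w K r₀) v₀ x)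
      = - ∫ x in (0:ℝ)..(2 * Real.pi), (v₀ x)^2 / w K r₀ x := by
    simp only [huv₀, hbdry, hVper] at hIBP
    linarith [hIBP]
  -- compute the RHS pairing
  have hRHS : pairW K r₀ (fun θ => A2 K r₀ v θ) v
      = -((1/2) * ∫ θ in (0:ℝ)..(2 * Real.pi), (v₀ θ)^2 / w K r₀ θ) := by
    simp only [pairW]
    simp only [hvzA2, hvzv]
    rw [hA2mean, zero_mul, zero_add]
    have he : ∀ θ ∈ Set.uIcc (0:ℝ) (2 * Real.pi),
        prim (w K r₀) (fun θ => A2 K r₀ v θ) θ * prim (w K r₀) v₀ θ / w K r₀ θ =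
        (1/2) * (2 * ((1/2) * deriv v θ + K * r₀ * Real.sin θ * v θ) / w K r₀ θ *
          prim (w K r₀) v₀ θ) - CA * (prim (w K r₀) v₀ θ / w K r₀ θ) := by
      intro θ _
      rw [hCA θ]
      ring
    have hi1 : IntervalIntegrable (fun θ => (1/2) *
        (2 * ((1/2) * deriv v θ + K * r₀ * Real.sin θ * v θ) / w K r₀ θ *
          prim (w K r₀) v₀ θ)) volume 0 (2 * Real.pi) :=
      (continuous_const.mul (hducont.mul hVcont)).intervalIntegrable _ _
    have hi2 : IntervalIntegrable (fun θ => CA * (prim (w K r₀) v₀ θ / w K r₀ θ))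
        volume 0 (2 * Real.pi) :=
      (continuous_const.mul (hVcont.div hwcont fun θ => (hwpos θ).ne')).intervalIntegrable _ _
    rw [intervalIntegral.integral_congr he, intervalIntegral.integral_sub hi1 hi2,
      intervalIntegral.integral_const_mul, intervalIntegral.integral_const_mul,
      hkey, hVmean, mul_zero, sub_zero]
    ring
  -- compute the LHS pairing
  have hvzv₀ : vz K r₀ v₀ = v₀ := by
    funext θ
    simp only [vz]
    rw [hv₀mean, zero_mul, sub_zero]
  have hLHS : pairW K r₀ (vz K r₀ v) (vz K r₀ v)
      = ∫ θ in (0:ℝ)..(2 * Real.pi), (prim (w K r₀) v₀ θ)^2 / w K r₀ θ := by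
    simp only [pairW]
    simp only [hvzv, hvzv₀]
    rw [hv₀mean, zero_mul, zero_add]
    apply intervalIntegral.integral_congr
    intro θ _
    ring
  -- the Poincaré inequality
  set m := (∫ θ in (0:ℝ)..(2 * Real.pi), prim (w K r₀) v₀ θ) / (2 * Real.pi) with hmdef
  have hfd : ∀ x, HasDerivAt (fun θ => prim (w K r₀) v₀ θ - m) (v₀ x) x :=
    fun x => (hVd x).sub_const m
  have hfmean : (∫ x in (0:ℝ)..(2 * Real.pi), (prim (w K r₀) v₀ x - m)) = 0 := by
    rw [intervalIntegral.integral_sub (hVcont.intervalIntegrable _ _)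
      (continuous_const.intervalIntegrable _ _), intervalIntegral.integral_const,
      smul_eq_mul, sub_zero, hmdef]
    field_simp
    ring
  have hWir : (∫ x in (0:ℝ)..(2 * Real.pi), (prim (w K r₀) v₀ x - m)^2)
      ≤ ∫ x in (0:ℝ)..(2 * Real.pi), (v₀ x)^2 :=
    wirtinger hfd hv₀cont (by rw [hVper]) hv₀per hfmean
  have hconst_ub : ∀ θ, 1 / w K r₀ θ ≤ Z * Real.exp c := by
    intro θ
    have h1 : 1 / w K r₀ θ ≤ 1 / (Real.exp (-c) / Z) :=
      one_div_le_one_div_of_le (by positivity) (hw_lb θ)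
    calc 1 / w K r₀ θ ≤ 1 / (Real.exp (-c) / Z) := h1
      _ = Z * Real.exp c := by
          rw [one_div_div, div_eq_mul_inv, Real.exp_neg, inv_inv]
  have hA_le_B : (∫ θ in (0:ℝ)..(2 * Real.pi), (prim (w K r₀) v₀ θ)^2 / w K r₀ θ)
      ≤ ∫ θ in (0:ℝ)..(2 * Real.pi), (prim (w K r₀) v₀ θ - m)^2 / w K r₀ θ := by
    have he : ∀ θ ∈ Set.uIcc (0:ℝ) (2 * Real.pi),
        (prim (w K r₀) v₀ θ - m)^2 / w K r₀ θ =
        ((prim (w K r₀) v₀ θ)^2 / w K r₀ θ - (2 * m) * (prim (w K r₀) v₀ θ / w K r₀ θ))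
          + m^2 * (1 / w K r₀ θ) := fun θ _ => by ring
    have hc1 : Continuous fun θ => (prim (w K r₀) v₀ θ)^2 / w K r₀ θ :=
      (hVcont.pow 2).div hwcont fun θ => (hwpos θ).ne'
    have hc2 : Continuous fun θ => (2 * m) * (prim (w K r₀) v₀ θ / w K r₀ θ) :=
      continuous_const.mul (hVcont.div hwcont fun θ => (hwpos θ).ne')
    have hi1 : IntervalIntegrable (fun θ => (prim (w K r₀) v₀ θ)^2 / w K r₀ θ -
        (2 * m) * (prim (w K r₀) v₀ θ / w K r₀ θ)) volume 0 (2 * Real.pi) :=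
      (hc1.sub hc2).intervalIntegrable _ _
    have hi2 : IntervalIntegrable (fun θ => m^2 * (1 / w K r₀ θ)) volume 0 (2 * Real.pi) :=
      (continuous_const.mul hinvwcont).intervalIntegrable _ _
    rw [intervalIntegral.integral_congr he, intervalIntegral.integral_add hi1 hi2,
      intervalIntegral.integral_sub (hc1.intervalIntegrable _ _) (hc2.intervalIntegrable _ _),
      intervalIntegral.integral_const_mul, intervalIntegral.integral_const_mul,
      hVmean, mul_zero, sub_zero]
    nlinarith [hIinvw, sq_nonneg m]
  have hB_le : (∫ θ in (0:ℝ)..(2 * Real.pi), (prim (w K r₀) v₀ θ - m)^2 / w K r₀ θ)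
      ≤ (Z * Real.exp c) * ∫ θ in (0:ℝ)..(2 * Real.pi), (prim (w K r₀) v₀ θ - m)^2 := by
    rw [← intervalIntegral.integral_const_mul]
    have hi1 : IntervalIntegrable (fun θ => (prim (w K r₀) v₀ θ - m)^2 / w K r₀ θ)
        volume 0 (2 * Real.pi) :=
      (((hVcont.sub continuous_const).pow 2).div hwcont fun θ =>
        (hwpos θ).ne').intervalIntegrable _ _
    have hi2 : IntervalIntegrable (fun θ => (Z * Real.exp c) * (prim (w K r₀) v₀ θ - m)^2)
        volume 0 (2 * Real.pi) :=
      (continuous_const.mul ((hVcont.sub continuous_const).pow 2)).intervalIntegrable _ _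
    apply intervalIntegral.integral_mono_on hπ' hi1 hi2
    intro θ _
    rw [div_eq_mul_one_div]
    calc (prim (w K r₀) v₀ θ - m)^2 * (1 / w K r₀ θ)
        ≤ (prim (w K r₀) v₀ θ - m)^2 * (Z * Real.exp c) :=
          mul_le_mul_of_nonneg_left (hconst_ub θ) (sq_nonneg _)
      _ = (Z * Real.exp c) * (prim (w K r₀) v₀ θ - m)^2 := mul_comm _ _
  have hv₀sq : (∫ θ in (0:ℝ)..(2 * Real.pi), (v₀ θ)^2)
      ≤ (Real.exp c / Z) * ∫ θ in (0:ℝ)..(2 * Real.pi), (v₀ θ)^2 / w K r₀ θ := by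
    rw [← intervalIntegral.integral_const_mul]
    have hi1 : IntervalIntegrable (fun θ => (v₀ θ)^2) volume 0 (2 * Real.pi) :=
      (hv₀cont.pow 2).intervalIntegrable _ _
    have hi2 : IntervalIntegrable (fun θ => (Real.exp c / Z) * ((v₀ θ)^2 / w K r₀ θ))
        volume 0 (2 * Real.pi) :=
      (continuous_const.mul ((hv₀cont.pow 2).div hwcont fun θ =>
        (hwpos θ).ne')).intervalIntegrable _ _
    apply intervalIntegral.integral_mono_on hπ' hi1 hi2
    intro θ _
    have h1 : (1:ℝ) ≤ (Real.exp c / Z) / w K r₀ θ := (one_le_div (hwpos θ)).mpr (hw_ub θ)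
    calc (v₀ θ)^2 = (v₀ θ)^2 * 1 := (mul_one _).symm
      _ ≤ (v₀ θ)^2 * ((Real.exp c / Z) / w K r₀ θ) :=
          mul_le_mul_of_nonneg_left h1 (sq_nonneg _)
      _ = Real.exp c / Z * ((v₀ θ)^2 / w K r₀ θ) := by ring
  -- final assembly
  rw [hLHS, hRHS, neg_neg]
  have hD0 : 0 ≤ ∫ θ in (0:ℝ)..(2 * Real.pi), (v₀ θ)^2 / w K r₀ θ :=
    intervalIntegral.integral_nonneg hπ' fun θ _ => div_nonneg (sq_nonneg _) (hwpos θ).le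
  have hchain : (∫ θ in (0:ℝ)..(2 * Real.pi), (prim (w K r₀) v₀ θ)^2 / w K r₀ θ)
      ≤ (Real.exp c * Real.exp c) *
        ∫ θ in (0:ℝ)..(2 * Real.pi), (v₀ θ)^2 / w K r₀ θ := by
    calc (∫ θ in (0:ℝ)..(2 * Real.pi), (prim (w K r₀) v₀ θ)^2 / w K r₀ θ)
        ≤ ∫ θ in (0:ℝ)..(2 * Real.pi), (prim (w K r₀) v₀ θ - m)^2 / w K r₀ θ := hA_le_B
      _ ≤ (Z * Real.exp c) * ∫ θ in (0:ℝ)..(2 * Real.pi), (prim (w K r₀) v₀ θ - m)^2 := hB_le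
      _ ≤ (Z * Real.exp c) * ∫ θ in (0:ℝ)..(2 * Real.pi), (v₀ θ)^2 :=
          mul_le_mul_of_nonneg_left hWir (mul_nonneg hZ.le (Real.exp_pos c).le)
      _ ≤ (Z * Real.exp c) * ((Real.exp c / Z) *
            ∫ θ in (0:ℝ)..(2 * Real.pi), (v₀ θ)^2 / w K r₀ θ) :=
          mul_le_mul_of_nonneg_left hv₀sq (mul_nonneg hZ.le (Real.exp_pos c).le)
      _ = (Real.exp c * Real.exp c) *
            ∫ θ in (0:ℝ)..(2 * Real.pi), (v₀ θ)^2 / w K r₀ θ := by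
          have hgen : ∀ (a b d : ℝ), b ≠ 0 → b * a * (a / b * d) = a * a * d := by
            intros a b d hb
            field_simp
          exact hgen (Real.exp c) Z _ hZ.ne'
  have hE : Real.exp (-(4 * K * r₀)) * (Real.exp c * Real.exp c) = 1 := by
    rw [← Real.exp_add, ← Real.exp_add,
      show -(4 * K * r₀) + (c + c) = 0 by rw [hcdef]; ring, Real.exp_zero]
  have h5 : Real.exp (-(4 * K * r₀)) * ((Real.exp c * Real.exp c) *
      ∫ θ in (0:ℝ)..(2 * Real.pi), (v₀ θ)^2 / w K r₀ θ)
      = ∫ θ in (0:ℝ)..(2 * Real.pi), (v₀ θ)^2 / w K r₀ θ := by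
    rw [← mul_assoc, hE, one_mul]
  have h6 := mul_le_mul_of_nonneg_left hchain (Real.exp_pos (-(4 * K * r₀))).le
  rw [h5] at h6
  linarith
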